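/- arXiv:1607.08473 — 3 statements merged into one kernel-verified Lean document; each statement's English description precedes it below -/
import Mathlib

section
/- Let ℓ ≥ 1 and let C be a circuit on ℓ qubits over the gate set {H, Z, CZ, CCZ}, i.e. a finite list of gates each of which is H_i, Z_i, CZ_{ij} (i ≠ j) or CCZ_{ijk} (i, j, k distinct), with unitary U given by the product of the corresponding matrices. Let h be the number of Hadamard gates in the list and set n = h + ℓ. Then there exists a multilinear polynomial f over F₂ in n variables of total degree at most 3 with zero constant coefficient such that ⟨0| H^{⊗ℓ} U H^{⊗ℓ} |0⟩ = gap(f) / 2^{h/2 + ℓ}. -/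
set_option maxHeartbeats 1000000


open MvPolynomial

/-- Gates on `ℓ` qubits from the set {H, Z, CZ, CCZ}. -/
inductive Gate (ℓ : ℕ) where
  | H (i : Fin ℓ)
  | Z (i : Fin ℓ)
  | CZ (i j : Fin ℓ)
  | CCZ (i j k : Fin ℓ)

/-- Well-formedness: the control/target qubits of CZ and CCZ gates are distinct. -/
def Gate.wf {ℓ : ℕ} : Gate ℓ → Prop
  | .H _ => True
  | .Z _ => True
  | .CZ i j => i ≠ j
  | .CCZ i j k => i ≠ j ∧ i ≠ k ∧ j ≠ k

/-- The unitary matrix corresponding to a gate: `H i` acts as the Hadamard matrix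
`(1/√2)·[[1,1],[1,−1]]` on qubit `i` and as identity elsewhere; `Z i`, `CZ i j`, `CCZ i j k`
are the diagonal matrices with entries `(−1)^(x i)`, `(−1)^(x i * x j)`, `(−1)^(x i * x j * x k)`. -/
noncomputable def gateMatrix {ℓ : ℕ} : Gate ℓ → Matrix (Fin ℓ → ZMod 2) (Fin ℓ → ZMod 2) ℂ
  | .H i => fun x y =>
      if ∀ j, j ≠ i → x j = y j then (-1 : ℂ) ^ ((x i * y i : ZMod 2)).val / (Real.sqrt 2 : ℂ)
      else 0
  | .Z i => Matrix.diagonal fun x => (-1 : ℂ) ^ ((x i : ZMod 2)).val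
  | .CZ i j => Matrix.diagonal fun x => (-1 : ℂ) ^ ((x i * x j : ZMod 2)).val
  | .CCZ i j k => Matrix.diagonal fun x => (-1 : ℂ) ^ ((x i * x j * x k : ZMod 2)).val

/-- The number of Hadamard gates in a circuit (a list of gates). -/
def hadCount {ℓ : ℕ} (C : List (Gate ℓ)) : ℕ :=
  C.countP fun g => match g with | .H _ => true | _ => false

/-- The `ℓ`-fold tensor power of the Hadamard matrix, with entries `(−1)^(x·y) / 2^(ℓ/2)`. -/
noncomputable def Hpow (ℓ : ℕ) : Matrix (Fin ℓ → ZMod 2) (Fin ℓ → ZMod 2) ℂ :=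
  fun x y => (-1 : ℂ) ^ ((∑ i, x i * y i : ZMod 2)).val / (Real.sqrt 2 : ℂ) ^ ℓ

/-- `gap g` is the number of inputs on which `g` evaluates to `0` minus the number of inputs on
which it evaluates to `1`. -/
def gap {T : Type*} [Fintype T] [DecidableEq T] (g : (T → ZMod 2) → ZMod 2) : ℤ :=
  ∑ x : T → ZMod 2, (-1 : ℤ) ^ (g x).val


def goodPoly {n : ℕ} (t : ℕ) (P : MvPolynomial (Fin n) (ZMod 2)) : Prop :=
  (∀ i, P.degreeOf i ≤ 1) ∧ P.totalDegree ≤ 3 ∧ P.coeff 0 = 0 ∧ ∀ i ∈ P.vars, (i : ℕ) < t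

lemma goodPoly_mono {n : ℕ} {t t' : ℕ} (h : t ≤ t') {P : MvPolynomial (Fin n) (ZMod 2)}
    (hP : goodPoly t P) : goodPoly t' P :=
  ⟨hP.1, hP.2.1, hP.2.2.1, fun i hi => lt_of_lt_of_le (hP.2.2.2 i hi) h⟩

lemma goodPoly_add {n t : ℕ} {P Q : MvPolynomial (Fin n) (ZMod 2)}
    (hP : goodPoly t P) (h1 : ∀ i, Q.degreeOf i ≤ 1) (h3 : Q.totalDegree ≤ 3)
    (h0 : Q.coeff 0 = 0) (hv : ∀ i ∈ Q.vars, (i : ℕ) < t) : goodPoly t (P + Q) := by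
  refine ⟨fun i => le_trans (degreeOf_add_le _ _ _) (max_le (hP.1 i) (h1 i)),
    le_trans (totalDegree_add _ _) (max_le hP.2.1 h3), ?_, fun i hi => ?_⟩
  · simp [coeff_add, hP.2.2.1, h0]
  · rcases Finset.mem_union.1 (vars_add_subset _ _ hi) with h | h
    exacts [hP.2.2.2 i h, hv i h]

lemma goodX {n t : ℕ} (a : Fin n) (ha : (a : ℕ) < t) {P : MvPolynomial (Fin n) (ZMod 2)}
    (hP : goodPoly t P) : goodPoly t (P + X a) := by
  refine goodPoly_add hP (fun i => ?_) ?_ ?_ (fun i hi => ?_)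
  · rw [degreeOf_X]; split <;> norm_num
  · simp [totalDegree_X]
  · simp
  · rw [vars_X] at hi; simp at hi; subst hi; exact ha

lemma coeff_zero_XX {n : ℕ} (a b : Fin n) :
    coeff 0 (X a * X b : MvPolynomial (Fin n) (ZMod 2)) = 0 := by
  have : constantCoeff (X a * X b : MvPolynomial (Fin n) (ZMod 2)) = 0 := by simp [map_mul]
  simpa [constantCoeff_eq] using this

lemma coeff_zero_XXX {n : ℕ} (a b c : Fin n) :
    coeff 0 (X a * X b * X c : MvPolynomial (Fin n) (ZMod 2)) = 0 := by
  have : constantCoeff (X a * X b * X c : MvPolynomial (Fin n) (ZMod 2)) = 0 := by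
    simp [map_mul]
  simpa [constantCoeff_eq] using this

lemma goodXX {n t : ℕ} (a b : Fin n) (hab : a ≠ b) (ha : (a : ℕ) < t) (hb : (b : ℕ) < t)
    {P : MvPolynomial (Fin n) (ZMod 2)} (hP : goodPoly t P) : goodPoly t (P + X a * X b) := by
  refine goodPoly_add hP (fun i => ?_) ?_ ?_ (fun i hi => ?_)
  · refine le_trans (degreeOf_mul_le _ _ _) ?_
    rw [degreeOf_X, degreeOf_X]
    rcases eq_or_ne i a with rfl | h1 <;> rcases eq_or_ne i b with rfl | h2 <;> simp_all
  · refine le_trans (totalDegree_mul _ _) ?_; simp [totalDegree_X]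
  · exact coeff_zero_XX a b
  · have := vars_mul (X a) (X b) hi
    rw [vars_X, vars_X] at this; simp at this
    rcases this with rfl | rfl <;> assumption

lemma goodXXX {n t : ℕ} (a b c : Fin n) (hab : a ≠ b) (hac : a ≠ c) (hbc : b ≠ c)
    (ha : (a : ℕ) < t) (hb : (b : ℕ) < t) (hc : (c : ℕ) < t)
    {P : MvPolynomial (Fin n) (ZMod 2)} (hP : goodPoly t P) :
    goodPoly t (P + X a * X b * X c) := by
  refine goodPoly_add hP (fun i => ?_) ?_ ?_ (fun i hi => ?_)
  · refine le_trans (degreeOf_mul_le _ _ _) ?_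
    refine le_trans (add_le_add (degreeOf_mul_le _ _ _) le_rfl) ?_
    rw [degreeOf_X, degreeOf_X, degreeOf_X]
    rcases eq_or_ne i a with rfl | h1 <;> rcases eq_or_ne i b with rfl | h2 <;>
      rcases eq_or_ne i c with rfl | h3 <;> simp_all
  · refine le_trans (totalDegree_mul _ _) ?_
    refine le_trans (add_le_add (totalDegree_mul _ _) le_rfl) ?_
    simp [totalDegree_X]
  · exact coeff_zero_XXX a b c
  · have := vars_mul (X a * X b) (X c) hi
    rw [vars_X] at this
    rcases Finset.mem_union.1 this with h | h
    · have := vars_mul (X a) (X b) h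
      rw [vars_X, vars_X] at this; simp at this
      rcases this with rfl | rfl <;> assumption
    · simp at h; subst h; exact hc

lemma update_inj {ℓ n : ℕ} {v : Fin ℓ → Fin n} (hv : Function.Injective v) {τ : Fin n}
    (hτ : ∀ k, v k ≠ τ) (i : Fin ℓ) : Function.Injective (Function.update v i τ) := by
  intro a b hab
  by_cases ha : a = i <;> by_cases hb : b = i
  · rw [ha, hb]
  · rw [ha, Function.update_self] at hab
    rw [Function.update_of_ne hb] at hab
    exact absurd hab.symm (hτ b)
  · rw [hb, Function.update_self] at hab
    rw [Function.update_of_ne ha] at hab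
    exact absurd hab (hτ a)
  · rw [Function.update_of_ne ha, Function.update_of_ne hb] at hab
    exact hv hab


noncomputable def eps (a : ZMod 2) : ℂ := (-1 : ℂ) ^ a.val

lemma eps_add (a b : ZMod 2) : eps (a + b) = eps a * eps b := by
  fin_cases a <;> fin_cases b <;> simp [eps, ZMod.val] <;> first | rfl | exact pow_one (-1 : ℂ)

noncomputable def Ssum {ℓ n : ℕ} (t : ℕ) (v : Fin ℓ → Fin n)
    (P : MvPolynomial (Fin n) (ZMod 2)) (y : Fin ℓ → ZMod 2) : ℂ :=
  ∑ x : Fin n → ZMod 2,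
    if (∀ i, x (v i) = y i) ∧ (∀ j : Fin n, t ≤ (j : ℕ) → x j = 0)
    then eps (eval x P) else 0

lemma eval_congr_lt {n t : ℕ} {P : MvPolynomial (Fin n) (ZMod 2)}
    (hPv : ∀ i ∈ P.vars, (i : ℕ) < t) {x x' : Fin n → ZMod 2}
    (h : ∀ j : Fin n, (j : ℕ) < t → x j = x' j) : eval x P = eval x' P := by
  have : eval₂Hom (RingHom.id (ZMod 2)) x P = eval₂Hom (RingHom.id (ZMod 2)) x' P :=
    eval₂Hom_congr' rfl (fun i hi _ => h i (hPv i hi)) rfl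
  simpa using this

lemma Ssum_mul_eps {ℓ n : ℕ} {t : ℕ} {v : Fin ℓ → Fin n} {P Q : MvPolynomial (Fin n) (ZMod 2)}
    {w : Fin ℓ → ZMod 2} {c : ZMod 2}
    (hQ : ∀ x : Fin n → ZMod 2, (∀ i, x (v i) = w i) → eval x Q = c) :
    Ssum t v P w * eps c = Ssum t v (P + Q) w := by
  rw [Ssum, Ssum, Finset.sum_mul]
  refine Finset.sum_congr rfl fun x _ => ?_
  by_cases h : (∀ i, x (v i) = w i) ∧ (∀ j : Fin n, t ≤ (j : ℕ) → x j = 0)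
  · rw [if_pos h, if_pos h, map_add, eps_add, hQ x h.1]
  · rw [if_neg h, if_neg h, zero_mul]

lemma sum_mul_matprod {α : Type*} [Fintype α] [DecidableEq α]
    (f : α → ℂ) (M R : Matrix α α ℂ) (z : α) :
    ∑ y, f y * (M * R) y z = ∑ w, (∑ y, f y * M y w) * R w z := by
  simp only [Matrix.mul_apply, Finset.mul_sum, Finset.sum_mul]
  rw [Finset.sum_comm]
  exact Finset.sum_congr rfl fun w _ => Finset.sum_congr rfl fun y _ => (mul_assoc _ _ _).symm

lemma sum_mul_diagonal {α : Type*} [Fintype α] [DecidableEq α]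
    (f : α → ℂ) (d : α → ℂ) (w : α) :
    ∑ y, f y * Matrix.diagonal d y w = f w * d w := by
  simp [Matrix.diagonal_apply, Finset.sum_ite_eq']

lemma zmod2_cases (a : ZMod 2) : a = 0 ∨ a = 1 := by revert a; decide

lemma sum_mul_Hmat {ℓ : ℕ} (f : (Fin ℓ → ZMod 2) → ℂ) (i : Fin ℓ) (w : Fin ℓ → ZMod 2) (s : ℂ) :
    ∑ y : Fin ℓ → ZMod 2, f y * (if ∀ j, j ≠ i → y j = w j then eps (y i * w i) / s else 0)
      = (f (Function.update w i 0) * eps (0 * w i)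
          + f (Function.update w i 1) * eps (1 * w i)) / s := by
  have key : ∀ y : Fin ℓ → ZMod 2,
      f y * (if ∀ j, j ≠ i → y j = w j then eps (y i * w i) / s else 0)
        = (if y = Function.update w i 0 then f (Function.update w i 0) * eps (0 * w i) / s else 0)
          + (if y = Function.update w i 1 then f (Function.update w i 1) * eps (1 * w i) / s
              else 0) := by
    intro y
    by_cases h : ∀ j, j ≠ i → y j = w j
    · have hy : y = Function.update w i (y i) := by
        funext j
        by_cases hj : j = i
        · subst hj; simp
        · rw [Function.update_of_ne hj]; exact h j hj
      rcases zmod2_cases (y i) with h0 | h0 <;> rw [h0] at hy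
      · rw [if_pos h, if_pos hy, if_neg, add_zero, ← hy, h0]
        · ring
        · rw [hy]; intro hc
          have := congrFun hc i; simp at this
      · rw [if_pos h, if_neg, if_pos hy, zero_add, ← hy, h0]
        · ring
        · rw [hy]; intro hc
          have := congrFun hc i; simp at this
    · have h0 : ∀ b : ZMod 2, y ≠ Function.update w i b := by
        intro b hc
        exact h fun j hj => by rw [hc, Function.update_of_ne hj]
      rw [if_neg h, if_neg (h0 0), if_neg (h0 1)]; ring
  rw [Finset.sum_congr rfl fun y _ => key y, Finset.sum_add_distrib]
  simp [Finset.sum_ite_eq', add_div]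

lemma Ssum_update_reindex {ℓ n : ℕ} {t : ℕ} (ht : t < n) {v : Fin ℓ → Fin n}
    (hvt : ∀ k, (v k : ℕ) < t) {P : MvPolynomial (Fin n) (ZMod 2)}
    (hPv : ∀ j ∈ P.vars, (j : ℕ) < t) (i : Fin ℓ) (w : Fin ℓ → ZMod 2) (b : ZMod 2) :
    Ssum t v P (Function.update w i b) * eps (b * w i)
      = ∑ x : Fin n → ZMod 2,
          if (∀ k, x (Function.update v i ⟨t, ht⟩ k) = w k)
              ∧ (∀ j : Fin n, t + 1 ≤ (j : ℕ) → x j = 0) ∧ x (v i) = b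
          then eps (eval x (P + X (v i) * X ⟨t, ht⟩)) else 0 := by
  classical
  set τ : Fin n := ⟨t, ht⟩ with hτ
  have hvτ : ∀ k, v k ≠ τ := fun k hc => by
    have := hvt k; rw [hc] at this; simp [hτ] at this
  rw [Ssum, Finset.sum_mul]
  simp only [ite_mul, zero_mul]
  rw [← Finset.sum_filter, ← Finset.sum_filter]
  refine Finset.sum_nbij' (fun x => Function.update x τ (w i))
    (fun x => Function.update x τ 0) ?_ ?_ ?_ ?_ ?_
  · intro x hx
    simp only [Finset.mem_filter] at hx ⊢
    obtain ⟨-, h1, h2⟩ := hx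
    refine ⟨Finset.mem_univ _, fun k => ?_, fun j hj => ?_, ?_⟩
    · by_cases hk : k = i
      · subst hk; rw [Function.update_self, Function.update_self]
      · rw [Function.update_of_ne hk, Function.update_of_ne (hvτ k), h1 k,
          Function.update_of_ne hk]
    · have hjτ : j ≠ τ := fun hc => by
        have : (j : ℕ) = t := by rw [hc]
        omega
      rw [Function.update_of_ne hjτ]; exact h2 j (by omega)
    · rw [Function.update_of_ne (hvτ i), h1 i, Function.update_self]
  · intro x hx
    simp only [Finset.mem_filter] at hx ⊢
    obtain ⟨-, h1, h2, h3⟩ := hx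
    refine ⟨Finset.mem_univ _, fun k => ?_, fun j hj => ?_⟩
    · rw [Function.update_of_ne (hvτ k)]
      by_cases hk : k = i
      · subst hk; rw [h3, Function.update_self]
      · rw [Function.update_of_ne hk, ← h1 k, Function.update_of_ne hk]
    · by_cases hjτ : j = τ
      · subst hjτ; simp
      · rw [Function.update_of_ne hjτ]
        refine h2 j ?_
        have : (j : ℕ) ≠ t := fun hc => hjτ (Fin.ext hc)
        omega
  · intro x hx
    simp only [Finset.mem_filter] at hx
    funext j
    by_cases hjτ : j = τ
    · rw [hjτ, Function.update_self]
      exact (hx.2.2 τ le_rfl).symm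
    · rw [Function.update_of_ne hjτ, Function.update_of_ne hjτ]
  · intro x hx
    simp only [Finset.mem_filter] at hx
    funext j
    by_cases hjτ : j = τ
    · rw [hjτ, Function.update_self]
      have := hx.2.1 i
      rw [Function.update_self] at this
      exact this.symm
    · rw [Function.update_of_ne hjτ, Function.update_of_ne hjτ]
  · intro x hx
    simp only [Finset.mem_filter] at hx
    obtain ⟨-, h1, h2⟩ := hx
    have hev : eval (Function.update x τ (w i)) P = eval x P := by
      refine (eval_congr_lt hPv fun j hjt => ?_)
      have : j ≠ τ := fun hc => by
        have : (j : ℕ) = t := by rw [hc]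
        omega
      rw [Function.update_of_ne this]
    rw [map_add, eps_add, hev]
    have h4 : Function.update x τ (w i) (v i) = b := by
      rw [Function.update_of_ne (hvτ i), h1 i, Function.update_self]
    have h5 : Function.update x τ (w i) τ = w i := Function.update_self τ (w i) x
    rw [map_mul, eval_X, eval_X, h4, h5]

lemma Ssum_H_combine {ℓ n : ℕ} {t : ℕ} (ht : t < n) {v : Fin ℓ → Fin n}
    (hvt : ∀ k, (v k : ℕ) < t) {P : MvPolynomial (Fin n) (ZMod 2)}
    (hPv : ∀ j ∈ P.vars, (j : ℕ) < t) (i : Fin ℓ) (w : Fin ℓ → ZMod 2) :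
    Ssum t v P (Function.update w i 0) * eps (0 * w i)
      + Ssum t v P (Function.update w i 1) * eps (1 * w i)
      = Ssum (t + 1) (Function.update v i ⟨t, ht⟩) (P + X (v i) * X ⟨t, ht⟩) w := by
  rw [Ssum_update_reindex ht hvt hPv i w 0, Ssum_update_reindex ht hvt hPv i w 1,
    ← Finset.sum_add_distrib, Ssum]
  refine Finset.sum_congr rfl fun x _ => ?_
  by_cases hA : (∀ k, x (Function.update v i ⟨t, ht⟩ k) = w k)
      ∧ (∀ j : Fin n, t + 1 ≤ (j : ℕ) → x j = 0)
  · rcases zmod2_cases (x (v i)) with h0 | h0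
    · rw [if_pos ⟨hA.1, hA.2, h0⟩, if_neg, if_pos hA, add_zero]
      rintro ⟨-, -, h1⟩
      rw [h0] at h1; exact absurd h1 (by decide)
    · have hc1 : (∀ k, x (Function.update v i ⟨t, ht⟩ k) = w k)
          ∧ (∀ j : Fin n, t + 1 ≤ (j : ℕ) → x j = 0) ∧ x (v i) = 1 := ⟨hA.1, hA.2, h0⟩
      rw [if_pos hc1, if_neg, if_pos hA, zero_add]
      rintro ⟨-, -, h1⟩
      rw [h0] at h1; exact absurd h1 (by decide)
  · rw [if_neg, if_neg, if_neg hA, add_zero]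
    · rintro ⟨a, b, -⟩; exact hA ⟨a, b⟩
    · rintro ⟨a, b, -⟩; exact hA ⟨a, b⟩

lemma hadCount_cons_H {ℓ : ℕ} (i : Fin ℓ) (D : List (Gate ℓ)) :
    hadCount (Gate.H i :: D) = hadCount D + 1 := by simp [hadCount, List.countP_cons]

lemma hadCount_cons_Z {ℓ : ℕ} (i : Fin ℓ) (D : List (Gate ℓ)) :
    hadCount (Gate.Z i :: D) = hadCount D := by simp [hadCount, List.countP_cons]

lemma hadCount_cons_CZ {ℓ : ℕ} (i j : Fin ℓ) (D : List (Gate ℓ)) :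
    hadCount (Gate.CZ i j :: D) = hadCount D := by simp [hadCount, List.countP_cons]

lemma hadCount_cons_CCZ {ℓ : ℕ} (i j k : Fin ℓ) (D : List (Gate ℓ)) :
    hadCount (Gate.CCZ i j k :: D) = hadCount D := by simp [hadCount, List.countP_cons]

lemma Z_step {ℓ n : ℕ} {t : ℕ} {v : Fin ℓ → Fin n} {P : MvPolynomial (Fin n) (ZMod 2)}
    (i : Fin ℓ) (w : Fin ℓ → ZMod 2) :
    ∑ y, Ssum t v P y * gateMatrix (Gate.Z i) y w = Ssum t v (P + X (v i)) w := by
  have hg : gateMatrix (Gate.Z i) = Matrix.diagonal (fun x : Fin ℓ → ZMod 2 => eps (x i)) := rfl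
  rw [hg, sum_mul_diagonal]
  exact Ssum_mul_eps fun x hx => by rw [eval_X, hx i]

lemma CZ_step {ℓ n : ℕ} {t : ℕ} {v : Fin ℓ → Fin n} {P : MvPolynomial (Fin n) (ZMod 2)}
    (i j : Fin ℓ) (w : Fin ℓ → ZMod 2) :
    ∑ y, Ssum t v P y * gateMatrix (Gate.CZ i j) y w
      = Ssum t v (P + X (v i) * X (v j)) w := by
  have hg : gateMatrix (Gate.CZ i j)
      = Matrix.diagonal (fun x : Fin ℓ → ZMod 2 => eps (x i * x j)) := rfl
  rw [hg, sum_mul_diagonal]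
  exact Ssum_mul_eps fun x hx => by rw [map_mul, eval_X, eval_X, hx i, hx j]

lemma CCZ_step {ℓ n : ℕ} {t : ℕ} {v : Fin ℓ → Fin n} {P : MvPolynomial (Fin n) (ZMod 2)}
    (i j k : Fin ℓ) (w : Fin ℓ → ZMod 2) :
    ∑ y, Ssum t v P y * gateMatrix (Gate.CCZ i j k) y w
      = Ssum t v (P + X (v i) * X (v j) * X (v k)) w := by
  have hg : gateMatrix (Gate.CCZ i j k)
      = Matrix.diagonal (fun x : Fin ℓ → ZMod 2 => eps (x i * x j * x k)) := rfl
  rw [hg, sum_mul_diagonal]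
  exact Ssum_mul_eps fun x hx => by
    rw [map_mul, map_mul, eval_X, eval_X, eval_X, hx i, hx j, hx k]

lemma H_step {ℓ n : ℕ} {t : ℕ} (ht : t < n) {v : Fin ℓ → Fin n}
    (hvt : ∀ k, (v k : ℕ) < t) {P : MvPolynomial (Fin n) (ZMod 2)}
    (hPv : ∀ j ∈ P.vars, (j : ℕ) < t) (i : Fin ℓ) (w : Fin ℓ → ZMod 2) :
    ∑ y, Ssum t v P y * gateMatrix (Gate.H i) y w
      = (Real.sqrt 2 : ℂ)⁻¹ * Ssum (t + 1) (Function.update v i ⟨t, ht⟩)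
          (P + X (v i) * X ⟨t, ht⟩) w := by
  have hg : ∀ y, gateMatrix (Gate.H i) y w
      = (if ∀ j, j ≠ i → y j = w j then eps (y i * w i) / (Real.sqrt 2 : ℂ) else 0) :=
    fun y => rfl
  calc ∑ y, Ssum t v P y * gateMatrix (Gate.H i) y w
      = ∑ y : Fin ℓ → ZMod 2, Ssum t v P y
          * (if ∀ j, j ≠ i → y j = w j then eps (y i * w i) / (Real.sqrt 2 : ℂ) else 0) :=
        Finset.sum_congr rfl fun y _ => by rw [hg]
    _ = (Ssum t v P (Function.update w i 0) * eps (0 * w i)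
          + Ssum t v P (Function.update w i 1) * eps (1 * w i)) / (Real.sqrt 2 : ℂ) :=
        sum_mul_Hmat _ i w _
    _ = _ := by
        rw [Ssum_H_combine ht hvt hPv i w, div_eq_mul_inv, mul_comm]

lemma main_lemma {ℓ n : ℕ} (D : List (Gate ℓ)) :
    ∀ t : ℕ, (∀ g ∈ D, g.wf) → t + hadCount D ≤ n →
    ∀ v : Fin ℓ → Fin n, Function.Injective v → (∀ i, (v i : ℕ) < t) →
    ∀ P : MvPolynomial (Fin n) (ZMod 2), goodPoly t P →
    ∃ (v' : Fin ℓ → Fin n) (P' : MvPolynomial (Fin n) (ZMod 2)),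
      Function.Injective v' ∧ (∀ i, (v' i : ℕ) < t + hadCount D) ∧
      goodPoly (t + hadCount D) P' ∧
      ∀ z, ∑ y, Ssum t v P y * (D.map gateMatrix).prod y z
            = (Real.sqrt 2 : ℂ)⁻¹ ^ hadCount D * Ssum (t + hadCount D) v' P' z := by
  induction D with
  | nil =>
    intro t _ htn v hv hvt P hP
    refine ⟨v, P, hv, by simpa [hadCount] using hvt, by simpa [hadCount] using hP, fun z => ?_⟩
    simp only [hadCount, List.countP_nil, List.map_nil, List.prod_nil, pow_zero, one_mul,
      Nat.add_zero]
    simp [Matrix.one_apply, mul_ite, Finset.sum_ite_eq']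
  | cons g D ih =>
    intro t hwf htn v hv hvt P hP
    have hwfD : ∀ g' ∈ D, g'.wf := fun g' hg' => hwf g' (List.mem_cons_of_mem _ hg')
    cases g with
    | Z i =>
      rw [hadCount_cons_Z] at htn ⊢
      obtain ⟨v', P', h1, h2, h3, h4⟩ :=
        ih t hwfD htn v hv hvt (P + X (v i)) (goodX (v i) (hvt i) hP)
      refine ⟨v', P', h1, h2, h3, fun z => ?_⟩
      rw [List.map_cons, List.prod_cons, sum_mul_matprod, ← h4 z]
      exact Finset.sum_congr rfl fun w _ => by rw [Z_step i w]
    | CZ i j =>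
      have hij : i ≠ j := hwf _ List.mem_cons_self
      rw [hadCount_cons_CZ] at htn ⊢
      obtain ⟨v', P', h1, h2, h3, h4⟩ :=
        ih t hwfD htn v hv hvt (P + X (v i) * X (v j))
          (goodXX (v i) (v j) (fun hc => hij (hv hc)) (hvt i) (hvt j) hP)
      refine ⟨v', P', h1, h2, h3, fun z => ?_⟩
      rw [List.map_cons, List.prod_cons, sum_mul_matprod, ← h4 z]
      exact Finset.sum_congr rfl fun w _ => by rw [CZ_step i j w]
    | CCZ i j k =>
      obtain ⟨hij, hik, hjk⟩ : i ≠ j ∧ i ≠ k ∧ j ≠ k := hwf _ List.mem_cons_self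
      rw [hadCount_cons_CCZ] at htn ⊢
      obtain ⟨v', P', h1, h2, h3, h4⟩ :=
        ih t hwfD htn v hv hvt (P + X (v i) * X (v j) * X (v k))
          (goodXXX (v i) (v j) (v k) (fun hc => hij (hv hc)) (fun hc => hik (hv hc))
            (fun hc => hjk (hv hc)) (hvt i) (hvt j) (hvt k) hP)
      refine ⟨v', P', h1, h2, h3, fun z => ?_⟩
      rw [List.map_cons, List.prod_cons, sum_mul_matprod, ← h4 z]
      exact Finset.sum_congr rfl fun w _ => by rw [CCZ_step i j k w]
    | H i =>
      rw [hadCount_cons_H] at htn ⊢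
      have ht : t < n := by omega
      have hτ : ∀ k, v k ≠ (⟨t, ht⟩ : Fin n) := fun k hc => by
        have := hvt k
        rw [hc] at this
        simp at this
      have hvt' : ∀ k, ((Function.update v i ⟨t, ht⟩ k : Fin n) : ℕ) < t + 1 := by
        intro k
        by_cases hk : k = i
        · rw [hk, Function.update_self]; exact Nat.lt_succ_self t
        · rw [Function.update_of_ne hk]; exact lt_of_lt_of_le (hvt k) (Nat.le_succ t)
      have hgood : goodPoly (t + 1) (P + X (v i) * X ⟨t, ht⟩) :=
        goodXX (v i) ⟨t, ht⟩ (hτ i) (lt_of_lt_of_le (hvt i) (Nat.le_succ t)) (Nat.lt_succ_self t)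
          (goodPoly_mono (Nat.le_succ t) hP)
      obtain ⟨v', P', h1, h2, h3, h4⟩ :=
        ih (t + 1) hwfD (by omega) (Function.update v i ⟨t, ht⟩) (update_inj hv hτ i) hvt'
          (P + X (v i) * X ⟨t, ht⟩) (by exact hgood)
      have harr : t + (hadCount D + 1) = t + 1 + hadCount D := by omega
      refine ⟨v', P', h1, fun i' => by rw [harr]; exact h2 i', by rw [harr]; exact h3,
        fun z => ?_⟩
      rw [List.map_cons, List.prod_cons, sum_mul_matprod]
      calc ∑ w, (∑ y, Ssum t v P y * gateMatrix (Gate.H i) y w) * (D.map gateMatrix).prod w z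
          = ∑ w, (Real.sqrt 2 : ℂ)⁻¹ * (Ssum (t + 1) (Function.update v i ⟨t, ht⟩)
              (P + X (v i) * X ⟨t, ht⟩) w * (D.map gateMatrix).prod w z) :=
            Finset.sum_congr rfl fun w _ => by
              rw [H_step ht hvt hP.2.2.2 i w, mul_assoc]
        _ = (Real.sqrt 2 : ℂ)⁻¹ * ((Real.sqrt 2 : ℂ)⁻¹ ^ hadCount D
              * Ssum (t + 1 + hadCount D) v' P' z) := by
            rw [← Finset.mul_sum, h4 z]
        _ = _ := by
            rw [harr, pow_succ]
            ring

lemma Ssum_init {ℓ n t : ℕ} {v : Fin ℓ → Fin n} (hv : Function.Injective v)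
    (hvt : ∀ i, (v i : ℕ) < t) (hsurj : ∀ j : Fin n, (j : ℕ) < t → ∃ i, v i = j)
    (y : Fin ℓ → ZMod 2) : Ssum t v 0 y = 1 := by
  classical
  set x₀ : Fin n → ZMod 2 := fun j => if h : ∃ i, v i = j then y h.choose else 0 with hx₀
  have hcond : (∀ i, x₀ (v i) = y i) ∧ (∀ j : Fin n, t ≤ (j : ℕ) → x₀ j = 0) := by
    constructor
    · intro i
      have hex : ∃ i', v i' = v i := ⟨i, rfl⟩
      rw [hx₀]
      dsimp only
      rw [dif_pos hex]
      congr 1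
      exact hv hex.choose_spec
    · intro j hj
      rw [hx₀]
      dsimp only
      rw [dif_neg]
      rintro ⟨i, rfl⟩
      exact absurd (hvt i) (by omega)
  have huniq : ∀ x : Fin n → ZMod 2,
      ((∀ i, x (v i) = y i) ∧ (∀ j : Fin n, t ≤ (j : ℕ) → x j = 0)) → x = x₀ := by
    intro x hx
    funext j
    by_cases hj : (j : ℕ) < t
    · obtain ⟨i, rfl⟩ := hsurj j hj
      rw [hx.1 i, hcond.1 i]
    · rw [hx.2 j (by omega), hcond.2 j (by omega)]
  rw [Ssum, Finset.sum_eq_single x₀]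
  · rw [if_pos hcond]
    simp [eps]
  · intro x _ hxne
    rw [if_neg]
    intro hc
    exact hxne (huniq x hc)
  · intro h
    exact absurd (Finset.mem_univ x₀) h

lemma Ssum_total {ℓ n : ℕ} (t : ℕ) (htn : ∀ j : Fin n, (j : ℕ) < t)
    (v : Fin ℓ → Fin n) (P : MvPolynomial (Fin n) (ZMod 2)) :
    ∑ z, Ssum t v P z = ∑ x : Fin n → ZMod 2, eps (eval x P) := by
  simp only [Ssum]
  rw [Finset.sum_comm]
  refine Finset.sum_congr rfl fun x _ => ?_
  have h2 : ∀ j : Fin n, t ≤ (j : ℕ) → x j = 0 := fun j hj => absurd (htn j) (by omega)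
  rw [Finset.sum_eq_single (fun i => x (v i))]
  · rw [if_pos ⟨fun i => rfl, h2⟩]
  · intro z _ hzne
    rw [if_neg]
    rintro ⟨h1, -⟩
    exact hzne (funext fun i => (h1 i).symm)
  · intro h
    exact absurd (Finset.mem_univ _) h

/-- For any circuit `C` on `ℓ ≥ 1` qubits over the gate set {H, Z, CZ, CCZ},
with `h` Hadamard gates and `n = h + ℓ`, there is a multilinear polynomial `f` over `𝔽₂` in `n`
variables of total degree at most 3 with zero constant coefficient such that
`⟨0| H^{⊗ℓ} U H^{⊗ℓ} |0⟩ = gap(f) / 2^(h/2 + ℓ)`. -/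
theorem circuit_polynomial_correspondence (ℓ : ℕ) (hℓ : 1 ≤ ℓ) (C : List (Gate ℓ))
    (hwf : ∀ g ∈ C, g.wf) :
    ∃ f : MvPolynomial (Fin (hadCount C + ℓ)) (ZMod 2),
      (∀ i, f.degreeOf i ≤ 1) ∧ f.totalDegree ≤ 3 ∧ f.coeff 0 = 0 ∧
      (Hpow ℓ * (C.map gateMatrix).prod * Hpow ℓ) (fun _ => 0) (fun _ => 0)
        = ((gap fun x => eval x f : ℤ) : ℂ)
            / ((Real.sqrt 2 : ℂ) ^ hadCount C * 2 ^ ℓ) := by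
  classical
  have hle : ∀ i : Fin ℓ, (i : ℕ) < hadCount C + ℓ :=
    fun i => lt_of_lt_of_le i.2 (Nat.le_add_left _ _)
  set v₀ : Fin ℓ → Fin (hadCount C + ℓ) := fun i => ⟨(i : ℕ), hle i⟩ with hv₀def
  have hv₀ : Function.Injective v₀ := fun a b hab => Fin.ext (by simpa using congrArg Fin.val hab)
  have hP₀ : goodPoly ℓ (0 : MvPolynomial (Fin (hadCount C + ℓ)) (ZMod 2)) :=
    ⟨fun i => by simp, by simp, by simp, fun i hi => by simp [vars_0] at hi⟩
  obtain ⟨v', P', hv', hvt', hgood, heq⟩ :=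
    main_lemma C ℓ hwf (by omega) v₀ hv₀ (fun i => i.2) 0 hP₀
  refine ⟨P', hgood.1, hgood.2.1, hgood.2.2.1, ?_⟩
  have hs0 : (Real.sqrt 2 : ℂ) ≠ 0 := by
    rw [Complex.ofReal_ne_zero]
    positivity
  have hss : (Real.sqrt 2 : ℂ) * (Real.sqrt 2 : ℂ) = 2 := by
    rw [← Complex.ofReal_mul, Real.mul_self_sqrt (by norm_num)]
    norm_num
  have hinit : ∀ y, Ssum ℓ v₀ (0 : MvPolynomial (Fin (hadCount C + ℓ)) (ZMod 2)) y = 1 :=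
    fun y => Ssum_init hv₀ (fun i => i.2) (fun j hj => ⟨⟨(j : ℕ), hj⟩, Fin.ext rfl⟩) y
  have hHrow : ∀ y, Hpow ℓ (fun _ => 0) y = 1 / (Real.sqrt 2 : ℂ) ^ ℓ := by
    intro y
    rw [Hpow]
    norm_num
  have hHcol : ∀ z, Hpow ℓ z (fun _ => 0) = 1 / (Real.sqrt 2 : ℂ) ^ ℓ := by
    intro z
    rw [Hpow]
    norm_num
  have hABentry : ∀ z, (Hpow ℓ * (C.map gateMatrix).prod) (fun _ => 0) z
      = (1 / (Real.sqrt 2 : ℂ) ^ ℓ)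
          * ((Real.sqrt 2 : ℂ)⁻¹ ^ hadCount C * Ssum (ℓ + hadCount C) v' P' z) := by
    intro z
    rw [Matrix.mul_apply, ← heq z, Finset.mul_sum]
    refine Finset.sum_congr rfl fun y _ => ?_
    rw [hHrow y, hinit y, one_mul]
  have hgap : ((gap fun x => eval x P' : ℤ) : ℂ) = ∑ x, eps (eval x P') := by
    rw [gap]
    push_cast
    rfl
  have htotal : ∑ z, Ssum (ℓ + hadCount C) v' P' z = ∑ x, eps (eval x P') :=
    Ssum_total _ (fun j => by have := j.2; omega) v' P'
  rw [Matrix.mul_apply]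
  calc ∑ z, (Hpow ℓ * (C.map gateMatrix).prod) (fun _ => 0) z * Hpow ℓ z (fun _ => 0)
      = ∑ z, (1 / (Real.sqrt 2 : ℂ) ^ ℓ)
          * ((Real.sqrt 2 : ℂ)⁻¹ ^ hadCount C * Ssum (ℓ + hadCount C) v' P' z)
          * (1 / (Real.sqrt 2 : ℂ) ^ ℓ) :=
        Finset.sum_congr rfl fun z _ => by rw [hABentry z, hHcol z]
    _ = (1 / (Real.sqrt 2 : ℂ) ^ ℓ) * (Real.sqrt 2 : ℂ)⁻¹ ^ hadCount C
          * (1 / (Real.sqrt 2 : ℂ) ^ ℓ) * ∑ z, Ssum (ℓ + hadCount C) v' P' z := by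
        rw [Finset.mul_sum]
        exact Finset.sum_congr rfl fun z _ => by ring
    _ = ((gap fun x => eval x P' : ℤ) : ℂ) / ((Real.sqrt 2 : ℂ) ^ hadCount C * 2 ^ ℓ) := by
        rw [htotal, ← hgap]
        have h2ℓ : (Real.sqrt 2 : ℂ) ^ ℓ * (Real.sqrt 2 : ℂ) ^ ℓ = 2 ^ ℓ := by
          rw [← mul_pow, hss]
        rw [eq_div_iff (mul_ne_zero (pow_ne_zero _ hs0) (pow_ne_zero _ two_ne_zero)), ← h2ℓ]
        field_simp
        rw [mul_comm, ← mul_assoc, ← mul_pow, mul_one_div_cancel hs0, one_pow, one_mul]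
end

section
/- Let ℓ ≥ 1 and let C be a circuit on ℓ qubits over the gate set {H, Z, CZ, CCZ} with unitary U, containing h Hadamard gates, and set n = h + ℓ. Then there exists a multilinear polynomial f over F₂ in n variables of total degree at most 3 such that for every pair x, y ∈ (Fin ℓ → ZMod 2) there is a multilinear polynomial L_{x,y} of total degree at most 1 with ⟨x| H^{⊗ℓ} U H^{⊗ℓ} |y⟩ = gap(f + L_{x,y}) / 2^{h/2 + ℓ}. -/
open MvPolynomial

lemma pow_val_add (p q : ZMod 2) :
    ((-1:ℂ))^((p+q).val) = (-1:ℂ)^p.val * (-1:ℂ)^q.val := by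
  rw [ZMod.val_add, ← pow_add, ← neg_one_pow_eq_pow_mod_two]

lemma degreeOf_X_mul_X_le {σ : Type*} [DecidableEq σ] (a b j : σ) (hab : a ≠ b) :
    degreeOf j ((X a * X b : MvPolynomial σ (ZMod 2))) ≤ 1 := by
  by_cases hj : j = b
  · subst hj
    rw [mul_comm, degreeOf_mul_X_of_ne _ (Ne.symm hab), degreeOf_X, if_pos rfl]
  · rw [degreeOf_mul_X_of_ne _ hj, degreeOf_X]
    split <;> omega

lemma degreeOf_X3_le {σ : Type*} [DecidableEq σ] (a b k j : σ)
    (hab : a ≠ b) (hac : a ≠ k) (hbc : b ≠ k) :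
    degreeOf j ((X a * X b * X k : MvPolynomial σ (ZMod 2))) ≤ 1 := by
  by_cases hj : j = k
  · subst hj
    rw [mul_right_comm, degreeOf_mul_X_of_ne _ (Ne.symm hbc)]
    exact degreeOf_X_mul_X_le _ _ _ hac
  · rw [degreeOf_mul_X_of_ne _ hj]
    exact degreeOf_X_mul_X_le a b _ hab

lemma degreeOf_rename_le_of_inj {σ τ : Type*} {ι : σ → τ}
    (h : Function.Injective ι) (p : MvPolynomial σ (ZMod 2))
    (hp : ∀ i, p.degreeOf i ≤ 1) (j : τ) : (rename ι p).degreeOf j ≤ 1 := by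
  classical
  by_cases hj : ∃ i, ι i = j
  · obtain ⟨i, rfl⟩ := hj
    rw [degreeOf_rename_of_injective h]
    exact hp i
  · rw [degreeOf, degrees_rename_of_injective h]
    rw [Multiset.count_eq_zero.2]
    · omega
    · intro hmem
      obtain ⟨i, -, rfl⟩ := Multiset.mem_map.1 hmem
      exact hj ⟨i, rfl⟩

lemma sum_hadamard_collapse {ℓ : ℕ} (z : Fin ℓ → ZMod 2) (i : Fin ℓ) (c : (Fin ℓ → ZMod 2) → ℂ) :
    ∑ u : Fin ℓ → ZMod 2, (if ∀ j, j ≠ i → z j = u j then c u else 0)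
      = ∑ b : ZMod 2, c (Function.update z i b) := by
  have hcond : ∀ (u : Fin ℓ → ZMod 2) (b : ZMod 2),
      (Function.update z i b = u) ↔ (b = u i ∧ ∀ j, j ≠ i → z j = u j) := by
    intro u b
    constructor
    · rintro rfl
      refine ⟨(Function.update_self i b z).symm, fun j hj => (Function.update_of_ne hj b z).symm⟩
    · rintro ⟨rfl, h⟩
      funext j
      by_cases hj : j = i
      · subst hj; simp
      · simp [Function.update_of_ne hj, h j hj]
  calc ∑ u : Fin ℓ → ZMod 2, (if ∀ j, j ≠ i → z j = u j then c u else 0)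
      = ∑ u : Fin ℓ → ZMod 2, ∑ b : ZMod 2,
          (if b = u i ∧ ∀ j, j ≠ i → z j = u j then c u else 0) := by
        refine Finset.sum_congr rfl fun u _ => ?_
        simp only [ite_and]
        rw [Finset.sum_ite_eq' Finset.univ (u i)]
        simp
    _ = ∑ b : ZMod 2, ∑ u : Fin ℓ → ZMod 2,
          (if b = u i ∧ ∀ j, j ≠ i → z j = u j then c u else 0) := Finset.sum_comm
    _ = ∑ b : ZMod 2, c (Function.update z i b) := by
        refine Finset.sum_congr rfl fun b _ => ?_
        simp only [← hcond]
        rw [Finset.sum_ite_eq Finset.univ (Function.update z i b)]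
        simp

theorem circuit_amp {ℓ : ℕ} (C : List (Gate ℓ)) (hwf : ∀ g ∈ C, g.wf) :
    ∃ f : MvPolynomial (Fin (hadCount C) ⊕ Fin ℓ) (ZMod 2),
    ∃ σ : Fin ℓ → Fin (hadCount C) ⊕ Fin ℓ,
      (∀ j, f.degreeOf j ≤ 1) ∧ f.totalDegree ≤ 3 ∧
      ∀ z w : Fin ℓ → ZMod 2,
        (C.map gateMatrix).prod z w
          = (∑ v : Fin (hadCount C) → ZMod 2,
              if (∀ q, Sum.elim v z (σ q) = w q)
              then ((-1:ℂ) ^ (MvPolynomial.eval (Sum.elim v z) f).val) else 0)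
            / (Real.sqrt 2 : ℂ) ^ (hadCount C) := by
  induction C with
  | nil =>
    rw [show hadCount ([] : List (Gate ℓ)) = 0 by simp [hadCount]]
    refine ⟨0, Sum.inr, by simp, by simp, fun z w => ?_⟩
    simp only [List.map_nil, List.prod_nil, Matrix.one_apply]
    rw [Fintype.sum_unique]
    simp [funext_iff]
  | cons g rest IH =>
    obtain ⟨f, σ, hml, hdeg, hamp⟩ := IH (fun g' hg' => hwf g' (List.mem_cons_of_mem _ hg'))
    cases g with
    | Z i =>
      rw [show hadCount (Gate.Z i :: rest) = hadCount rest by simp [hadCount]]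
      refine ⟨f + X (Sum.inr i), σ, fun j => ?_, ?_, fun z w => ?_⟩
      · refine le_trans (degreeOf_add_le _ _ _) (max_le (hml j) ?_)
        rw [degreeOf_X]; split <;> omega
      · exact le_trans (totalDegree_add _ _) (max_le hdeg (by simp [totalDegree_X]))
      · rw [List.map_cons, List.prod_cons]
        rw [show gateMatrix (Gate.Z i)
            = Matrix.diagonal (fun x : Fin ℓ → ZMod 2 => (-1 : ℂ) ^ ((x i : ZMod 2)).val)
          from rfl, Matrix.diagonal_mul, hamp z w, ← mul_div_assoc, Finset.mul_sum]
        congr 1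
        refine Finset.sum_congr rfl fun v _ => ?_
        rw [mul_ite, mul_zero]
        refine if_congr Iff.rfl ?_ rfl
        rw [map_add, eval_X, Sum.elim_inr, pow_val_add, mul_comm]
    | CZ i j =>
      have hij : i ≠ j := hwf _ (List.mem_cons_self)
      rw [show hadCount (Gate.CZ i j :: rest) = hadCount rest by simp [hadCount]]
      refine ⟨f + X (Sum.inr i) * X (Sum.inr j), σ, fun m => ?_, ?_, fun z w => ?_⟩
      · refine le_trans (degreeOf_add_le _ _ _) (max_le (hml m) ?_)
        exact degreeOf_X_mul_X_le _ _ _ (by simpa using hij)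
      · refine le_trans (totalDegree_add _ _) (max_le hdeg ?_)
        refine le_trans (totalDegree_mul _ _) ?_
        simp [totalDegree_X]
      · rw [List.map_cons, List.prod_cons]
        rw [show gateMatrix (Gate.CZ i j)
            = Matrix.diagonal (fun x : Fin ℓ → ZMod 2 => (-1 : ℂ) ^ ((x i * x j : ZMod 2)).val)
          from rfl, Matrix.diagonal_mul, hamp z w, ← mul_div_assoc, Finset.mul_sum]
        congr 1
        refine Finset.sum_congr rfl fun v _ => ?_
        rw [mul_ite, mul_zero]
        refine if_congr Iff.rfl ?_ rfl
        rw [map_add, map_mul, eval_X, eval_X, Sum.elim_inr, Sum.elim_inr, pow_val_add, mul_comm]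
    | CCZ i j k =>
      obtain ⟨hij, hik, hjk⟩ := hwf _ (List.mem_cons_self)
      rw [show hadCount (Gate.CCZ i j k :: rest) = hadCount rest by simp [hadCount]]
      refine ⟨f + X (Sum.inr i) * X (Sum.inr j) * X (Sum.inr k), σ, fun m => ?_, ?_, fun z w => ?_⟩
      · refine le_trans (degreeOf_add_le _ _ _) (max_le (hml m) ?_)
        exact degreeOf_X3_le _ _ _ _ (by simpa using hij) (by simpa using hik) (by simpa using hjk)
      · refine le_trans (totalDegree_add _ _) (max_le hdeg ?_)
        refine le_trans (totalDegree_mul _ _) ?_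
        have h1 : (X (Sum.inr i) * X (Sum.inr j) :
            MvPolynomial (Fin (hadCount rest) ⊕ Fin ℓ) (ZMod 2)).totalDegree ≤ 2 :=
          le_trans (totalDegree_mul _ _) (by simp [totalDegree_X])
        have h2 : (X (Sum.inr k) :
            MvPolynomial (Fin (hadCount rest) ⊕ Fin ℓ) (ZMod 2)).totalDegree = 1 :=
          totalDegree_X _
        omega
      · rw [List.map_cons, List.prod_cons]
        rw [show gateMatrix (Gate.CCZ i j k)
            = Matrix.diagonal (fun x : Fin ℓ → ZMod 2 =>
                (-1 : ℂ) ^ ((x i * x j * x k : ZMod 2)).val)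
          from rfl, Matrix.diagonal_mul, hamp z w, ← mul_div_assoc, Finset.mul_sum]
        congr 1
        refine Finset.sum_congr rfl fun v _ => ?_
        rw [mul_ite, mul_zero]
        refine if_congr Iff.rfl ?_ rfl
        rw [map_add, map_mul, map_mul, eval_X, eval_X, eval_X,
          Sum.elim_inr, Sum.elim_inr, Sum.elim_inr, pow_val_add, mul_comm]
    | H i =>
      rw [show hadCount (Gate.H i :: rest) = hadCount rest + 1 by simp [hadCount]]
      set ι : (Fin (hadCount rest) ⊕ Fin ℓ) → (Fin (hadCount rest + 1) ⊕ Fin ℓ) :=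
        Sum.elim (fun k => Sum.inl k.succ)
          (fun j => if j = i then Sum.inl 0 else Sum.inr j) with hι
      have hinj : Function.Injective ι := by
        rintro (k₁|j₁) (k₂|j₂) hh <;>
          simp only [hι, Sum.elim_inl, Sum.elim_inr] at hh <;>
          (try split_ifs at hh) <;>
          simp_all [Fin.succ_inj, Fin.succ_ne_zero, (Fin.succ_ne_zero _).symm]
      refine ⟨rename ι f + X (Sum.inr i) * X (Sum.inl 0), fun q => ι (σ q),
        fun j => ?_, ?_, fun z w => ?_⟩
      · refine le_trans (degreeOf_add_le _ _ _)
          (max_le (degreeOf_rename_le_of_inj hinj f hml j) ?_)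
        exact degreeOf_X_mul_X_le _ _ _ (by simp)
      · refine le_trans (totalDegree_add _ _)
          (max_le (le_trans (totalDegree_rename_le _ _) hdeg) ?_)
        have h1 : (X (Sum.inr i) * X (Sum.inl 0) :
            MvPolynomial (Fin (hadCount rest + 1) ⊕ Fin ℓ) (ZMod 2)).totalDegree ≤ 2 :=
          le_trans (totalDegree_mul _ _) (by simp [totalDegree_X])
        omega
      · rw [List.map_cons, List.prod_cons, Matrix.mul_apply]
        have hg : ∀ u, gateMatrix (Gate.H i) z u * (List.map gateMatrix rest).prod u w
            = if (∀ j, j ≠ i → z j = u j)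
              then ((-1:ℂ)^((z i * u i : ZMod 2)).val / (Real.sqrt 2:ℂ))
                * (List.map gateMatrix rest).prod u w
              else 0 := by
          intro u
          rw [show gateMatrix (Gate.H i) z u = (if ∀ j, j ≠ i → z j = u j then
            (-1 : ℂ) ^ ((z i * u i : ZMod 2)).val / (Real.sqrt 2 : ℂ) else 0) from rfl,
            ite_mul, zero_mul]
        simp only [hg]
        rw [sum_hadamard_collapse z i
          (fun u => ((-1:ℂ)^((z i * u i : ZMod 2)).val / (Real.sqrt 2:ℂ))
            * (List.map gateMatrix rest).prod u w)]
        simp only [Function.update_self]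
        simp only [hamp]
        rw [← Equiv.sum_comp (Fin.consEquiv (fun _ : Fin (hadCount rest + 1) => ZMod 2))
          (fun v : Fin (hadCount rest + 1) → ZMod 2 =>
            if (∀ q, Sum.elim v z (ι (σ q)) = w q)
            then ((-1:ℂ) ^ (MvPolynomial.eval (Sum.elim v z)
              (rename ι f + X (Sum.inr i) * X (Sum.inl 0))).val) else 0)]
        rw [Fintype.sum_prod_type, Finset.sum_div]
        refine Finset.sum_congr rfl fun b _ => ?_
        rw [div_mul_div_comm, ← pow_succ']
        congr 1
        rw [Finset.mul_sum]
        refine Finset.sum_congr rfl fun v' _ => ?_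
        rw [mul_ite, mul_zero]
        have he : (Fin.consEquiv (fun _ : Fin (hadCount rest + 1) => ZMod 2)) (b, v') = Fin.cons b v' := rfl
        have helem : ∀ s, Sum.elim (Fin.cons b v') z (ι s)
            = Sum.elim v' (Function.update z i b) s := by
          rintro (k|j)
          · simp [hι, Fin.cons_succ]
          · by_cases hj : j = i
            · subst hj; simp [hι]
            · simp [hι, hj, Function.update_of_ne hj]
        refine if_congr ?_ ?_ rfl
        · refine forall_congr' fun q => ?_
          rw [he, helem (σ q)]
        · rw [he, map_add, map_mul, eval_X, eval_X, eval_rename]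
          have hco : (Sum.elim (Fin.cons b v') z ∘ ι) = Sum.elim v' (Function.update z i b) :=
            funext helem
          rw [hco, Sum.elim_inr, Sum.elim_inl, Fin.cons_zero, pow_val_add]
          ring

/-- For any circuit `C` on `ℓ ≥ 1` qubits over the gate set {H, Z, CZ, CCZ},
with `h` Hadamard gates and `n = h + ℓ`, there is a multilinear polynomial `f` over `𝔽₂` in `n`
variables of total degree at most 3 such that for every pair `x, y` there is a multilinear
polynomial `L` of total degree at most 1 with
`⟨x| H^{⊗ℓ} U H^{⊗ℓ} |y⟩ = gap(f + L) / 2^(h/2 + ℓ)`. -/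
theorem all_amplitudes_polynomial (ℓ : ℕ) (hℓ : 1 ≤ ℓ) (C : List (Gate ℓ))
    (hwf : ∀ g ∈ C, g.wf) :
    ∃ f : MvPolynomial (Fin (hadCount C + ℓ)) (ZMod 2),
      (∀ i, f.degreeOf i ≤ 1) ∧ f.totalDegree ≤ 3 ∧
      ∀ x y : Fin ℓ → ZMod 2,
        ∃ L : MvPolynomial (Fin (hadCount C + ℓ)) (ZMod 2),
          (∀ i, L.degreeOf i ≤ 1) ∧ L.totalDegree ≤ 1 ∧
          (Hpow ℓ * (C.map gateMatrix).prod * Hpow ℓ) x y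
            = ((gap fun v => eval v (f + L) : ℤ) : ℂ)
                / ((Real.sqrt 2 : ℂ) ^ hadCount C * 2 ^ ℓ) := by
  classical
  obtain ⟨f0, σ, hml, hdeg, hamp⟩ := circuit_amp C hwf
  set e : Fin (hadCount C) ⊕ Fin ℓ ≃ Fin (hadCount C + ℓ) := finSumFinEquiv with he
  refine ⟨rename e f0, fun j => degreeOf_rename_le_of_inj e.injective f0 hml j,
    le_trans (totalDegree_rename_le _ _) hdeg, fun x y => ?_⟩
  set s : ℂ := (Real.sqrt 2 : ℂ) with hsdef
  have hs : s * s = 2 := by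
    rw [hsdef, ← Complex.ofReal_mul]
    norm_num
  set L : MvPolynomial (Fin (hadCount C + ℓ)) (ZMod 2) :=
    (∑ q, (MvPolynomial.C (x q)) * X (e (Sum.inr q)))
      + (∑ q, X (e (σ q)) * (MvPolynomial.C (y q))) with hL
  have hL1 : ∀ j, L.degreeOf j ≤ 1 := by
    intro j
    refine le_trans (degreeOf_add_le _ _ _) (max_le ?_ ?_)
    · refine le_trans (degreeOf_sum_le _ _ _) ?_
      refine Finset.sup_le fun q _ => ?_
      refine le_trans (degreeOf_C_mul_le _ _ _) ?_
      rw [degreeOf_X]; split <;> omega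
    · refine le_trans (degreeOf_sum_le _ _ _) ?_
      refine Finset.sup_le fun q _ => ?_
      refine le_trans (degreeOf_mul_C_le _ _ _) ?_
      rw [degreeOf_X]; split <;> omega
  have hL2 : L.totalDegree ≤ 1 := by
    refine le_trans (totalDegree_add _ _) (max_le ?_ ?_) <;>
    · refine le_trans (totalDegree_finset_sum _ _) ?_
      refine Finset.sup_le fun q _ => ?_
      refine le_trans (totalDegree_mul _ _) ?_
      simp [totalDegree_X, totalDegree_C]
  refine ⟨L, hL1, hL2, ?_⟩
  -- collapse of the w-sum
  have collapse : ∀ z : Fin ℓ → ZMod 2,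
      (∑ w : Fin ℓ → ZMod 2,
        ((List.map gateMatrix C).prod z w * Hpow ℓ w y))
      = ∑ v : Fin (hadCount C) → ZMod 2,
          ((-1:ℂ)^(eval (Sum.elim v z) f0).val
            * Hpow ℓ (fun q => Sum.elim v z (σ q)) y) / s ^ hadCount C := by
    intro z
    simp only [hamp, Finset.sum_div, Finset.sum_mul, ← hsdef]
    rw [Finset.sum_comm]
    refine Finset.sum_congr rfl fun v _ => ?_
    simp only [ite_div, zero_div, ite_mul, zero_mul]
    have hcond : ∀ w : Fin ℓ → ZMod 2,
        (∀ q, Sum.elim v z (σ q) = w q) ↔ ((fun q => Sum.elim v z (σ q)) = w) :=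
      fun w => funext_iff.symm
    simp only [hcond]
    rw [Finset.sum_ite_eq Finset.univ (fun q => Sum.elim v z (σ q))
      (fun w => (-1:ℂ)^(eval (Sum.elim v z) f0).val / s ^ hadCount C * Hpow ℓ w y)]
    simp [div_mul_eq_mul_div]
  have lhs_eq : (Hpow ℓ * (C.map gateMatrix).prod * Hpow ℓ) x y
      = ∑ z : Fin ℓ → ZMod 2, ∑ v : Fin (hadCount C) → ZMod 2,
          ((-1:ℂ) ^ ((∑ q, x q * z q : ZMod 2)).val
            * (-1:ℂ) ^ (eval (Sum.elim v z) f0).val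
            * (-1:ℂ) ^ ((∑ q, (Sum.elim v z (σ q)) * y q : ZMod 2)).val)
          * (s ^ hadCount C * 2 ^ ℓ)⁻¹ := by
    have hs0 : s ≠ 0 := by
      intro h0
      rw [h0, mul_zero] at hs
      norm_num at hs
    simp only [Matrix.mul_apply, Finset.sum_mul]
    rw [Finset.sum_comm]
    refine Finset.sum_congr rfl fun z _ => ?_
    calc ∑ w : Fin ℓ → ZMod 2, Hpow ℓ x z * (List.map gateMatrix C).prod z w * Hpow ℓ w y
        = Hpow ℓ x z * ∑ w : Fin ℓ → ZMod 2,
            ((List.map gateMatrix C).prod z w * Hpow ℓ w y) := by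
          rw [Finset.mul_sum]
          simp only [mul_assoc]
      _ = Hpow ℓ x z * ∑ v : Fin (hadCount C) → ZMod 2,
            ((-1:ℂ)^(eval (Sum.elim v z) f0).val
              * Hpow ℓ (fun q => Sum.elim v z (σ q)) y) / s ^ hadCount C := by
          rw [collapse z]
      _ = _ := by
          rw [Finset.mul_sum]
          refine Finset.sum_congr rfl fun v _ => ?_
          simp only [Hpow, ← hsdef]
          have h2l : ((2:ℂ))^ℓ = s^ℓ * s^ℓ := by rw [← hs, mul_pow]
          rw [h2l]
          field_simp
  rw [lhs_eq]
  set E2 : ((Fin (hadCount C) → ZMod 2) × (Fin ℓ → ZMod 2)) ≃ (Fin (hadCount C + ℓ) → ZMod 2) :=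
    (Equiv.sumArrowEquivProdArrow _ _ _).symm.trans (Equiv.arrowCongr e (Equiv.refl _)) with hE2def
  have hgap : ((gap fun v => eval v (rename e f0 + L) : ℤ) : ℂ)
      = ∑ v'' : Fin (hadCount C + ℓ) → ZMod 2,
          (-1:ℂ)^((eval v'' (rename e f0 + L)).val) := by
    unfold gap
    push_cast
    rfl
  rw [hgap]
  rw [show (∑ v'' : Fin (hadCount C + ℓ) → ZMod 2,
        (-1:ℂ)^((eval v'' (rename e f0 + L)).val))
      = ∑ p : (Fin (hadCount C) → ZMod 2) × (Fin ℓ → ZMod 2),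
          (-1:ℂ)^((eval (E2 p) (rename e f0 + L)).val) from
    (Fintype.sum_equiv E2 _ _ (fun p => rfl)).symm]
  rw [Fintype.sum_prod_type]
  rw [show (∑ vh : Fin (hadCount C) → ZMod 2, ∑ z : Fin ℓ → ZMod 2,
        (-1:ℂ)^((eval (E2 (vh, z)) (rename e f0 + L)).val))
      = ∑ z : Fin ℓ → ZMod 2, ∑ vh : Fin (hadCount C) → ZMod 2,
        (-1:ℂ)^((eval (E2 (vh, z)) (rename e f0 + L)).val) from Finset.sum_comm]
  simp only [div_eq_mul_inv, Finset.sum_mul]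
  refine Finset.sum_congr rfl fun z _ => ?_
  refine Finset.sum_congr rfl fun v _ => ?_
  have hE2 : E2 (v, z) = Sum.elim v z ∘ e.symm := by
    funext t
    simp [hE2def, Equiv.sumArrowEquivProdArrow, Equiv.arrowCongr]
  have heval : eval (E2 (v,z)) (rename e f0 + L)
      = eval (Sum.elim v z) f0
        + ((∑ q, x q * z q) + (∑ q, Sum.elim v z (σ q) * y q)) := by
    rw [hE2, map_add, eval_rename]
    congr 1
    · have hc : ((Sum.elim v z ∘ ⇑e.symm) ∘ ⇑e) = Sum.elim v z := by
        funext t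
        cases t <;> simp
      rw [hc]
    · rw [hL, map_add, map_sum, map_sum]
      congr 1 <;> refine Finset.sum_congr rfl fun q _ => ?_ <;>
        simp [Equiv.symm_apply_apply]
  rw [heval, pow_val_add, pow_val_add]
  ring
end

section
/- For every multilinear polynomial f over F₂ in n variables of total degree at most 3 with zero constant coefficient, there exist m, k ∈ ℕ and a multilinear polynomial f' over F₂ in m variables of total degree at most 3 with zero constant coefficient, such that every variable of f' occurs in at most 3 monomials of f', and gap(f') = 2^k · gap(f). -/
open MvPolynomial

namespace SparsifyAux

/-- The sign character. -/
def chi (u : ZMod 2) : ℤ := (-1) ^ u.val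

lemma chi_add (u v : ZMod 2) : chi (u + v) = chi u * chi v := by revert u v; decide

lemma chi_zero : chi 0 = 1 := rfl

lemma chi_sum {ι : Type*} (s : Finset ι) (g : ι → ZMod 2) :
    chi (∑ i ∈ s, g i) = ∏ i ∈ s, chi (g i) := by
  classical
  induction s using Finset.cons_induction with
  | empty => simp [chi_zero]
  | cons a s ha ih => rw [Finset.sum_cons, Finset.prod_cons, chi_add, ih]

variable {n : ℕ} (f : MvPolynomial (Fin n) (ZMod 2))

/-- Monomials of `f` containing variable `i`. -/
noncomputable abbrev O (i : Fin n) : Finset (Fin n →₀ ℕ) :=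
  f.support.filter fun s => s i ≠ 0

noncomputable abbrev t (i : Fin n) : ℕ := (O f i).card

abbrev YI := Σ i : Fin n, Fin (t f i + 1)
abbrev ZI := Σ i : Fin n, Fin (t f i)
abbrev V := YI f ⊕ ZI f
abbrev A := ↥f.support ⊕ (ZI f ⊕ ZI f)

noncomputable def oidx (i : Fin n) : ↥(O f i) ≃ Fin (t f i) :=
  Fintype.equivFinOfCardEq (Fintype.card_coe _)

noncomputable def idx (i : Fin n) (s : Fin n →₀ ℕ) : Fin (t f i + 1) :=
  if h : s ∈ O f i then (oidx f i ⟨s, h⟩).succ else 0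

noncomputable def d : A f → (V f →₀ ℕ)
  | .inl s => ∑ i ∈ (s : Fin n →₀ ℕ).support, Finsupp.single (Sum.inl ⟨i, idx f i s⟩) 1
  | .inr (.inl e) => Finsupp.single (Sum.inr e) 1
      + Finsupp.single (Sum.inl ⟨e.1, e.2.castSucc⟩) 1
  | .inr (.inr e) => Finsupp.single (Sum.inr e) 1
      + Finsupp.single (Sum.inl ⟨e.1, e.2.succ⟩) 1

noncomputable def poly : MvPolynomial (V f) (ZMod 2) := ∑ α : A f, monomial (d f α) 1


section Structure

lemma mem_O_iff (i : Fin n) (s : Fin n →₀ ℕ) :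
    s ∈ O f i ↔ s ∈ f.support ∧ i ∈ s.support := by
  simp [O, Finsupp.mem_support_iff]

lemma idx_ne_zero {i : Fin n} {s : Fin n →₀ ℕ} (h : s ∈ O f i) : idx f i s ≠ 0 := by
  rw [idx, dif_pos h]
  exact Fin.succ_ne_zero _

lemma idx_inj {i : Fin n} {s s' : Fin n →₀ ℕ} (h : s ∈ O f i) (h' : s' ∈ O f i)
    (he : idx f i s = idx f i s') : s = s' := by
  simp only [idx, dif_pos h, dif_pos h'] at he
  have := (oidx f i).injective (Fin.succ_injective _ he)
  exact Subtype.ext_iff.mp this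

lemma d_main_apply (s : ↥f.support) (w : V f) :
    d f (.inl s) w =
      (((s : Fin n →₀ ℕ).support.filter
        fun i => (Sum.inl ⟨i, idx f i s⟩ : V f) = w)).card := by
  rw [show d f (.inl s) = ∑ i ∈ (s : Fin n →₀ ℕ).support,
      Finsupp.single (Sum.inl ⟨i, idx f i (s : Fin n →₀ ℕ)⟩ : V f) 1 from rfl]
  rw [Finsupp.finset_sum_apply]
  rw [Finset.card_eq_sum_ones, Finset.sum_filter]
  congr 1
  ext i
  simp [Finsupp.single_apply]

lemma d_main_apply_le_one (s : ↥f.support) (w : V f) : d f (.inl s) w ≤ 1 := by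
  rw [d_main_apply]
  apply Finset.card_le_one.mpr
  intro a ha b hb
  simp only [Finset.mem_filter] at ha hb
  have := ha.2.trans hb.2.symm
  simp only [Sum.inl.injEq, Sigma.mk.inj_iff] at this
  exact this.1

lemma d_main_apply_inr (s : ↥f.support) (e : ZI f) : d f (.inl s) (.inr e) = 0 := by
  rw [d_main_apply]
  simp

lemma d_main_apply_eq_one {s : ↥f.support} {i : Fin n}
    (hi : i ∈ (s : Fin n →₀ ℕ).support) :
    d f (.inl s) (.inl ⟨i, idx f i s⟩) = 1 := by
  rw [d_main_apply, Finset.card_eq_one]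
  refine ⟨i, ?_⟩
  ext j
  simp only [Finset.mem_filter, Finset.mem_singleton]
  constructor
  · rintro ⟨hj, hw⟩
    simp only [Sum.inl.injEq, Sigma.mk.inj_iff] at hw
    exact hw.1
  · rintro rfl
    exact ⟨hi, rfl⟩

lemma d_main_ne_zero {s : ↥f.support} {w : V f} (h : d f (.inl s) w ≠ 0) :
    ∃ i ∈ (s : Fin n →₀ ℕ).support, w = .inl ⟨i, idx f i s⟩ := by
  rw [d_main_apply] at h
  obtain ⟨i, hi⟩ := Finset.card_pos.mp (Nat.pos_of_ne_zero h)
  simp only [Finset.mem_filter] at hi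
  exact ⟨i, hi.1, hi.2.symm⟩

lemma support_nonempty_of_mem (hconst : f.coeff 0 = 0) (s : ↥f.support) :
    (s : Fin n →₀ ℕ).support.Nonempty := by
  rw [Finsupp.support_nonempty_iff]
  intro h0
  have := MvPolynomial.mem_support_iff.mp s.2
  rw [h0, hconst] at this
  exact this rfl

lemma mem_O_of_mem_support {s : ↥f.support} {i : Fin n}
    (hi : i ∈ (s : Fin n →₀ ℕ).support) : (s : Fin n →₀ ℕ) ∈ O f i :=
  (mem_O_iff f i _).mpr ⟨s.2, hi⟩

lemma castSucc_ne_succ {k : ℕ} (j : Fin k) : j.castSucc ≠ j.succ := by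
  simp [Fin.ext_iff]

lemma d_cl_apply_inr (e e' : ZI f) :
    d f (.inr (.inl e)) (.inr e') = if e = e' then 1 else 0 := by
  simp [d, Finsupp.single_apply]

lemma d_cr_apply_inr (e e' : ZI f) :
    d f (.inr (.inr e)) (.inr e') = if e = e' then 1 else 0 := by
  simp [d, Finsupp.single_apply]

lemma d_cl_apply_inl (e : ZI f) (y : YI f) :
    d f (.inr (.inl e)) (.inl y) = if (⟨e.1, e.2.castSucc⟩ : YI f) = y then 1 else 0 := by
  simp [d, Finsupp.single_apply]

lemma d_cr_apply_inl (e : ZI f) (y : YI f) :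
    d f (.inr (.inr e)) (.inl y) = if (⟨e.1, e.2.succ⟩ : YI f) = y then 1 else 0 := by
  simp [d, Finsupp.single_apply]

lemma d_inj (hconst : f.coeff 0 = 0) : Function.Injective (d f) := by
  intro α β h
  match α, β with
  | .inl s, .inl s' =>
    obtain ⟨i, hi⟩ := support_nonempty_of_mem f hconst s
    have h1 : d f (.inl s') (.inl ⟨i, idx f i (s : Fin n →₀ ℕ)⟩) ≠ 0 := by
      rw [← h, d_main_apply_eq_one f hi]; exact one_ne_zero
    obtain ⟨i', hi', hw⟩ := d_main_ne_zero f h1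
    simp only [Sum.inl.injEq, Sigma.mk.inj_iff] at hw
    obtain ⟨rfl, hidx⟩ := hw
    have hidx' : idx f i (s : Fin n →₀ ℕ) = idx f i (s' : Fin n →₀ ℕ) :=
      heq_iff_eq.mp hidx
    have := idx_inj f (mem_O_of_mem_support f hi) (mem_O_of_mem_support f hi') hidx'
    congr 1
    exact Subtype.ext this
  | .inl s, .inr (.inl e) =>
    have h1 := DFunLike.congr_fun h (Sum.inr e)
    rw [d_main_apply_inr, d_cl_apply_inr, if_pos rfl] at h1
    exact absurd h1.symm one_ne_zero
  | .inl s, .inr (.inr e) =>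
    have h1 := DFunLike.congr_fun h (Sum.inr e)
    rw [d_main_apply_inr, d_cr_apply_inr, if_pos rfl] at h1
    exact absurd h1.symm one_ne_zero
  | .inr (.inl e), .inl s =>
    have h1 := DFunLike.congr_fun h (Sum.inr e)
    rw [d_main_apply_inr, d_cl_apply_inr, if_pos rfl] at h1
    exact absurd h1 one_ne_zero
  | .inr (.inr e), .inl s =>
    have h1 := DFunLike.congr_fun h (Sum.inr e)
    rw [d_main_apply_inr, d_cr_apply_inr, if_pos rfl] at h1
    exact absurd h1 one_ne_zero
  | .inr (.inl e), .inr (.inl e') =>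
    have h1 := DFunLike.congr_fun h (Sum.inr e)
    rw [d_cl_apply_inr, d_cl_apply_inr, if_pos rfl] at h1
    by_cases he : e' = e
    · exact congrArg (fun x => Sum.inr (Sum.inl x)) he.symm
    · rw [if_neg he] at h1; exact absurd h1 one_ne_zero
  | .inr (.inr e), .inr (.inr e') =>
    have h1 := DFunLike.congr_fun h (Sum.inr e)
    rw [d_cr_apply_inr, d_cr_apply_inr, if_pos rfl] at h1
    by_cases he : e' = e
    · exact congrArg (fun x => Sum.inr (Sum.inr x)) he.symm
    · rw [if_neg he] at h1; exact absurd h1 one_ne_zero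
  | .inr (.inl e), .inr (.inr e') =>
    have h1 := DFunLike.congr_fun h (Sum.inr e)
    rw [d_cl_apply_inr, d_cr_apply_inr, if_pos rfl] at h1
    have he : e' = e := by
      by_contra hne
      rw [if_neg hne] at h1; exact absurd h1 one_ne_zero
    subst he
    have h2 := DFunLike.congr_fun h (Sum.inl ⟨e'.1, e'.2.castSucc⟩)
    rw [d_cl_apply_inl, d_cr_apply_inl, if_pos rfl] at h2
    rw [if_neg] at h2
    · exact absurd h2 one_ne_zero
    · simp only [Sigma.mk.inj_iff, heq_eq_eq, true_and]
      exact (castSucc_ne_succ e'.2).symm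
  | .inr (.inr e), .inr (.inl e') =>
    have h1 := DFunLike.congr_fun h (Sum.inr e)
    rw [d_cr_apply_inr, d_cl_apply_inr, if_pos rfl] at h1
    have he : e' = e := by
      by_contra hne
      rw [if_neg hne] at h1; exact absurd h1 one_ne_zero
    subst he
    have h2 := DFunLike.congr_fun h (Sum.inl ⟨e'.1, e'.2.castSucc⟩)
    rw [d_cl_apply_inl, d_cr_apply_inl, if_pos rfl] at h2
    rw [if_neg] at h2
    · exact absurd h2.symm one_ne_zero
    · simp only [Sigma.mk.inj_iff, heq_eq_eq, true_and]
      exact (castSucc_ne_succ e'.2).symm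

lemma support_sum_monomial {B σ : Type*} [Fintype B] [DecidableEq σ] {d : B → (σ →₀ ℕ)}
    (hd : Function.Injective d) :
    (∑ α : B, monomial (d α) (1 : ZMod 2)).support = Finset.univ.image d := by
  classical
  ext m
  rw [MvPolynomial.mem_support_iff, MvPolynomial.coeff_sum]
  simp_rw [coeff_monomial]
  constructor
  · intro hne
    by_contra hm
    apply hne
    apply Finset.sum_eq_zero
    intro α _
    rw [if_neg]
    intro hc
    exact hm (Finset.mem_image.mpr ⟨α, Finset.mem_univ _, hc⟩)
  · rintro hm
    obtain ⟨α, -, rfl⟩ := Finset.mem_image.mp hm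
    rw [Finset.sum_eq_single α]
    · simp
    · intro β _ hβ
      rw [if_neg]
      exact fun hc => hβ (hd hc)
    · intro hα
      exact absurd (Finset.mem_univ α) hα

lemma support_poly (hconst : f.coeff 0 = 0) :
    (poly f).support = Finset.univ.image (d f) :=
  support_sum_monomial (d_inj f hconst)

lemma d_le_one (α : A f) (w : V f) : d f α w ≤ 1 := by
  match α with
  | .inl s => exact d_main_apply_le_one f s w
  | .inr (.inl e) =>
    match w with
    | .inl y => rw [d_cl_apply_inl]; split <;> omega
    | .inr e' => rw [d_cl_apply_inr]; split <;> omega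
  | .inr (.inr e) =>
    match w with
    | .inl y => rw [d_cr_apply_inl]; split <;> omega
    | .inr e' => rw [d_cr_apply_inr]; split <;> omega

lemma d_sum_le (hdeg : f.totalDegree ≤ 3) (α : A f) :
    ((d f α).sum fun _ e => e) ≤ 3 := by
  match α with
  | .inl s =>
    have hrw : ((d f (.inl s)).sum fun _ e => e)
        = ∑ i ∈ (s : Fin n →₀ ℕ).support,
            ((Finsupp.single (Sum.inl ⟨i, idx f i (s : Fin n →₀ ℕ)⟩ : V f) (1 : ℕ)).sum
              fun _ e => e) := by
      rw [show d f (.inl s) = ∑ i ∈ (s : Fin n →₀ ℕ).support,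
        Finsupp.single (Sum.inl ⟨i, idx f i (s : Fin n →₀ ℕ)⟩ : V f) (1 : ℕ) from rfl]
      exact (Finsupp.sum_finset_sum_index (h := fun _ e => e)
        (fun _ => rfl) (fun _ _ _ => rfl)).symm
    rw [hrw]
    have h1 : ∀ i ∈ (s : Fin n →₀ ℕ).support,
        ((Finsupp.single (Sum.inl ⟨i, idx f i (s : Fin n →₀ ℕ)⟩ : V f) (1 : ℕ)).sum
          fun _ e => e) = 1 := by
      intro i _
      rw [Finsupp.sum_single_index rfl]
    rw [Finset.sum_congr rfl h1, Finset.sum_const, smul_eq_mul, mul_one]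
    calc (s : Fin n →₀ ℕ).support.card
        ≤ ∑ i ∈ (s : Fin n →₀ ℕ).support, (s : Fin n →₀ ℕ) i := by
          simpa using Finset.card_nsmul_le_sum (s : Fin n →₀ ℕ).support
            (fun i => (s : Fin n →₀ ℕ) i) 1
            (fun i hi => Nat.one_le_iff_ne_zero.mpr (Finsupp.mem_support_iff.mp hi))
      _ = (s : Fin n →₀ ℕ).sum fun _ e => e := rfl
      _ ≤ f.totalDegree := le_totalDegree s.2
      _ ≤ 3 := hdeg
  | .inr (.inl e) =>
    rw [show d f (.inr (.inl e)) = Finsupp.single (Sum.inr e : V f) 1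
        + Finsupp.single (Sum.inl ⟨e.1, e.2.castSucc⟩ : V f) 1 from rfl]
    rw [Finsupp.sum_add_index' (fun _ => rfl) (fun _ _ _ => rfl),
      Finsupp.sum_single_index rfl, Finsupp.sum_single_index rfl]
    omega
  | .inr (.inr e) =>
    rw [show d f (.inr (.inr e)) = Finsupp.single (Sum.inr e : V f) 1
        + Finsupp.single (Sum.inl ⟨e.1, e.2.succ⟩ : V f) 1 from rfl]
    rw [Finsupp.sum_add_index' (fun _ => rfl) (fun _ _ _ => rfl),
      Finsupp.sum_single_index rfl, Finsupp.sum_single_index rfl]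
    omega

lemma d_ne_zero (hconst : f.coeff 0 = 0) (α : A f) : d f α ≠ 0 := by
  intro h0
  match α with
  | .inl s =>
    obtain ⟨i, hi⟩ := support_nonempty_of_mem f hconst s
    have := d_main_apply_eq_one f hi
    rw [h0] at this
    simp at this
  | .inr (.inl e) =>
    have := d_cl_apply_inr f e e
    rw [h0, if_pos rfl] at this
    simp at this
  | .inr (.inr e) =>
    have := d_cr_apply_inr f e e
    rw [h0, if_pos rfl] at this
    simp at this

lemma sigma_castSucc_inj {e e' : ZI f}
    (h : (⟨e.1, e.2.castSucc⟩ : YI f) = ⟨e'.1, e'.2.castSucc⟩) : e = e' := by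
  obtain ⟨i, j⟩ := e
  obtain ⟨i', j'⟩ := e'
  obtain ⟨h1, h2⟩ := Sigma.mk.inj_iff.mp h
  subst h1
  rw [heq_eq_eq, Fin.castSucc_inj] at h2
  exact congrArg (fun z => (⟨i, z⟩ : ZI f)) h2

lemma sigma_succ_inj {e e' : ZI f}
    (h : (⟨e.1, e.2.succ⟩ : YI f) = ⟨e'.1, e'.2.succ⟩) : e = e' := by
  obtain ⟨i, j⟩ := e
  obtain ⟨i', j'⟩ := e'
  obtain ⟨h1, h2⟩ := Sigma.mk.inj_iff.mp h
  subst h1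
  rw [heq_eq_eq, Fin.succ_inj] at h2
  exact congrArg (fun z => (⟨i, z⟩ : ZI f)) h2

lemma occ_le_three (v : V f) :
    (Finset.univ.filter fun α : A f => d f α v ≠ 0).card ≤ 3 := by
  classical
  have := Finset.card_le_card_of_injOn
    (f := fun α : A f => match α with
      | .inl _ => (0 : Fin 3) | .inr (.inl _) => 1 | .inr (.inr _) => 2)
    (s := Finset.univ.filter fun α : A f => d f α v ≠ 0) (t := Finset.univ)
    (fun a _ => Finset.mem_univ _) ?_
  · simpa using this
  intro α hα β hβ htag
  simp only [Finset.coe_filter, Set.mem_setOf_eq, Finset.mem_univ, true_and] at hα hβ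
  match α, β with
  | .inl s, .inl s' =>
    obtain ⟨i, hi, rfl⟩ := d_main_ne_zero f hα
    obtain ⟨i', hi', hw⟩ := d_main_ne_zero f hβ
    simp only [Sum.inl.injEq, Sigma.mk.inj_iff] at hw
    obtain ⟨rfl, hidx⟩ := hw
    have := idx_inj f (mem_O_of_mem_support f hi) (mem_O_of_mem_support f hi')
      (heq_iff_eq.mp hidx)
    exact congrArg Sum.inl (Subtype.ext this)
  | .inl s, .inr (.inl e) => exact absurd htag (by simp [Fin.ext_iff])
  | .inl s, .inr (.inr e) => exact absurd htag (by simp [Fin.ext_iff])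
  | .inr (.inl e), .inl s => exact absurd htag (by simp [Fin.ext_iff])
  | .inr (.inr e), .inl s => exact absurd htag (by simp [Fin.ext_iff])
  | .inr (.inl e), .inr (.inr e') => exact absurd htag (by simp [Fin.ext_iff])
  | .inr (.inr e), .inr (.inl e') => exact absurd htag (by simp [Fin.ext_iff])
  | .inr (.inl e), .inr (.inl e') =>
    match v with
    | .inr e'' =>
      rw [d_cl_apply_inr] at hα hβ
      have h1 : e = e'' := by by_contra hne; rw [if_neg hne] at hα; exact hα rfl
      have h2 : e' = e'' := by by_contra hne; rw [if_neg hne] at hβ; exact hβ rfl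
      rw [h1, h2]
    | .inl y =>
      rw [d_cl_apply_inl] at hα hβ
      have h1 : (⟨e.1, e.2.castSucc⟩ : YI f) = y := by
        by_contra hne; rw [if_neg hne] at hα; exact hα rfl
      have h2 : (⟨e'.1, e'.2.castSucc⟩ : YI f) = y := by
        by_contra hne; rw [if_neg hne] at hβ; exact hβ rfl
      exact congrArg (fun x => Sum.inr (Sum.inl x))
        (sigma_castSucc_inj f (h1.trans h2.symm))
  | .inr (.inr e), .inr (.inr e') =>
    match v with
    | .inr e'' =>
      rw [d_cr_apply_inr] at hα hβ
      have h1 : e = e'' := by by_contra hne; rw [if_neg hne] at hα; exact hα rfl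
      have h2 : e' = e'' := by by_contra hne; rw [if_neg hne] at hβ; exact hβ rfl
      rw [h1, h2]
    | .inl y =>
      rw [d_cr_apply_inl] at hα hβ
      have h1 : (⟨e.1, e.2.succ⟩ : YI f) = y := by
        by_contra hne; rw [if_neg hne] at hα; exact hα rfl
      have h2 : (⟨e'.1, e'.2.succ⟩ : YI f) = y := by
        by_contra hne; rw [if_neg hne] at hβ; exact hβ rfl
      exact congrArg (fun x => Sum.inr (Sum.inr x))
        (sigma_succ_inj f (h1.trans h2.symm))

lemma poly_degreeOf (hconst : f.coeff 0 = 0) (v : V f) : (poly f).degreeOf v ≤ 1 := by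
  rw [degreeOf_eq_sup, support_poly f hconst]
  apply Finset.sup_le
  intro m hm
  obtain ⟨α, -, rfl⟩ := Finset.mem_image.mp hm
  exact d_le_one f α v

lemma poly_totalDegree (hconst : f.coeff 0 = 0) (hdeg : f.totalDegree ≤ 3) :
    (poly f).totalDegree ≤ 3 := by
  rw [totalDegree, support_poly f hconst]
  apply Finset.sup_le
  intro m hm
  obtain ⟨α, -, rfl⟩ := Finset.mem_image.mp hm
  exact d_sum_le f hdeg α

lemma poly_coeff_zero (hconst : f.coeff 0 = 0) : (poly f).coeff 0 = 0 := by
  by_contra h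
  have : (0 : V f →₀ ℕ) ∈ (poly f).support := MvPolynomial.mem_support_iff.mpr h
  rw [support_poly f hconst] at this
  obtain ⟨α, -, hα⟩ := Finset.mem_image.mp this
  exact d_ne_zero f hconst α hα

lemma poly_occ (hconst : f.coeff 0 = 0) (v : V f) :
    ((poly f).support.filter fun mon => mon v ≠ 0).card ≤ 3 := by
  classical
  rw [support_poly f hconst, Finset.filter_image,
    Finset.card_image_of_injective _ (d_inj f hconst)]
  exact occ_le_three f v

end Structure

section Gap

lemma eval_single_prod (x : V f → ZMod 2) (w : V f) :
    (Finsupp.single w (1 : ℕ)).prod (fun v e => x v ^ e) = x w := by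
  rw [Finsupp.prod_single_index (h := fun v e => x v ^ e) (pow_zero _), pow_one]

lemma eval_poly (x : V f → ZMod 2) :
    eval x (poly f) =
      (∑ s : ↥f.support, ∏ i ∈ (s : Fin n →₀ ℕ).support,
        x (Sum.inl ⟨i, idx f i (s : Fin n →₀ ℕ)⟩))
      + ((∑ e : ZI f, x (Sum.inr e) * x (Sum.inl ⟨e.1, e.2.castSucc⟩))
        + (∑ e : ZI f, x (Sum.inr e) * x (Sum.inl ⟨e.1, e.2.succ⟩))) := by
  rw [poly, map_sum, Fintype.sum_sum_type, Fintype.sum_sum_type]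
  congr 1
  · apply Finset.sum_congr rfl
    intro s _
    rw [show d f (.inl s) = ∑ i ∈ (s : Fin n →₀ ℕ).support,
      Finsupp.single (Sum.inl ⟨i, idx f i (s : Fin n →₀ ℕ)⟩ : V f) (1 : ℕ) from rfl]
    rw [eval_monomial, one_mul]
    rw [← Finsupp.prod_finset_sum_index (h := fun v e => x v ^ e)
      (fun _ => pow_zero _) (fun _ _ _ => pow_add _ _ _)]
    apply Finset.prod_congr rfl
    intro i _
    exact eval_single_prod f x _
  congr 1
  · apply Finset.sum_congr rfl
    intro e _
    rw [show d f (.inr (.inl e)) = Finsupp.single (Sum.inr e : V f) 1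
        + Finsupp.single (Sum.inl ⟨e.1, e.2.castSucc⟩ : V f) 1 from rfl]
    rw [eval_monomial, one_mul,
      Finsupp.prod_add_index' (fun _ => pow_zero _) (fun _ _ _ => pow_add _ _ _),
      eval_single_prod, eval_single_prod]
  · apply Finset.sum_congr rfl
    intro e _
    rw [show d f (.inr (.inr e)) = Finsupp.single (Sum.inr e : V f) 1
        + Finsupp.single (Sum.inl ⟨e.1, e.2.succ⟩ : V f) 1 from rfl]
    rw [eval_monomial, one_mul,
      Finsupp.prod_add_index' (fun _ => pow_zero _) (fun _ _ _ => pow_add _ _ _),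
      eval_single_prod, eval_single_prod]

/-- The main part of the polynomial, evaluated on the copy variables. -/
noncomputable def G (a : YI f → ZMod 2) : ZMod 2 :=
  ∑ s : ↥f.support, ∏ i ∈ (s : Fin n →₀ ℕ).support, a ⟨i, idx f i (s : Fin n →₀ ℕ)⟩

/-- The constraint values. -/
noncomputable def c (a : YI f → ZMod 2) (e : ZI f) : ZMod 2 :=
  a ⟨e.1, e.2.castSucc⟩ + a ⟨e.1, e.2.succ⟩

lemma chain_const {a : YI f → ZMod 2} (h : ∀ e : ZI f, c f a e = 0) (i0 : Fin n)
    (j : Fin (t f i0 + 1)) : a ⟨i0, j⟩ = a ⟨i0, 0⟩ := by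
  induction j using Fin.induction with
  | zero => rfl
  | succ j ih =>
    have h2 := h ⟨i0, j⟩
    rw [c] at h2
    have huv : ∀ u v : ZMod 2, u + v = 0 → u = v := by decide
    have h3 := huv _ _ h2
    rw [← h3]
    exact ih

lemma eval_f_eq (hml : ∀ i, f.degreeOf i ≤ 1) (x : Fin n → ZMod 2) :
    eval x f = ∑ s : ↥f.support, ∏ i ∈ (s : Fin n →₀ ℕ).support, x i := by
  have hone : ∀ a : ZMod 2, a ≠ 0 → a = 1 := by decide
  calc eval x f = ∑ s ∈ f.support, f.coeff s * ∏ i ∈ s.support, x i ^ s i := eval_eq _ _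
    _ = ∑ s ∈ f.support, ∏ i ∈ s.support, x i := by
        apply Finset.sum_congr rfl
        intro s hs
        rw [hone _ (MvPolynomial.mem_support_iff.mp hs), one_mul]
        apply Finset.prod_congr rfl
        intro i hi
        have h1 : s i ≤ 1 := by
          refine le_trans ?_ (hml i)
          rw [MvPolynomial.degreeOf_eq_sup]
          exact Finset.le_sup (f := fun m => m i) hs
        have h0 : s i ≠ 0 := Finsupp.mem_support_iff.mp hi
        have : s i = 1 := by omega
        rw [this, pow_one]
    _ = ∑ s : ↥f.support, ∏ i ∈ (s : Fin n →₀ ℕ).support, x i :=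
        (Finset.sum_coe_sort _ _).symm

lemma inner_sum (a : YI f → ZMod 2) :
    (∑ b : ZI f → ZMod 2, chi (eval (Sum.elim a b) (poly f)))
      = chi (G f a) * (if ∀ e : ZI f, c f a e = 0
          then (2 : ℤ) ^ Fintype.card (ZI f) else 0) := by
  classical
  have he : ∀ b : ZI f → ZMod 2,
      eval (Sum.elim a b) (poly f) = G f a + ∑ e : ZI f, b e * c f a e := by
    intro b
    rw [eval_poly]
    congr 1
    rw [← Finset.sum_add_distrib]
    apply Finset.sum_congr rfl
    intro e _
    rw [c, mul_add]
    rfl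
  have hfac : ∀ cc : ZMod 2, (∑ β : ZMod 2, chi (β * cc)) = if cc = 0 then 2 else 0 := by
    decide
  calc (∑ b : ZI f → ZMod 2, chi (eval (Sum.elim a b) (poly f)))
      = ∑ b : ZI f → ZMod 2, chi (G f a) * ∏ e : ZI f, chi (b e * c f a e) := by
        apply Finset.sum_congr rfl
        intro b _
        rw [he b, chi_add, chi_sum]
    _ = chi (G f a) * ∑ b : ZI f → ZMod 2, ∏ e : ZI f, chi (b e * c f a e) := by
        rw [Finset.mul_sum]
    _ = chi (G f a) * ∏ e : ZI f, ∑ β : ZMod 2, chi (β * c f a e) := by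
        congr 1
        have hp := Finset.prod_univ_sum (fun _ : ZI f => (Finset.univ : Finset (ZMod 2)))
          (fun e β => chi (β * c f a e))
        rw [Fintype.piFinset_univ] at hp
        exact hp.symm
    _ = chi (G f a) * (if ∀ e : ZI f, c f a e = 0
          then (2 : ℤ) ^ Fintype.card (ZI f) else 0) := by
        congr 1
        by_cases hall : ∀ e : ZI f, c f a e = 0
        · rw [if_pos hall]
          rw [Finset.prod_congr rfl (fun e _ => by rw [hfac, if_pos (hall e)])]
          rw [Finset.prod_const, Finset.card_univ]
        · rw [if_neg hall]
          push_neg at hall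
          obtain ⟨e, he0⟩ := hall
          refine Finset.prod_eq_zero (Finset.mem_univ e) ?_
          rw [hfac, if_neg he0]

lemma gap_poly (hml : ∀ i, f.degreeOf i ≤ 1) :
    (∑ x : V f → ZMod 2, chi (eval x (poly f)))
      = 2 ^ Fintype.card (ZI f) * ∑ x : Fin n → ZMod 2, chi (eval x f) := by
  classical
  have h1 : (∑ x : V f → ZMod 2, chi (eval x (poly f)))
      = ∑ p : (YI f → ZMod 2) × (ZI f → ZMod 2),
          chi (eval (Sum.elim p.1 p.2) (poly f)) := by
    apply Fintype.sum_equiv (Equiv.sumArrowEquivProdArrow (YI f) (ZI f) (ZMod 2))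
    intro x
    congr 1
    apply congrArg (fun y => eval y (poly f)) ?_ |>.symm
    funext w
    cases w <;> rfl
  rw [h1, Fintype.sum_prod_type]
  have h2 : ∀ a : YI f → ZMod 2,
      (∑ b : ZI f → ZMod 2, chi (eval (Sum.elim a b) (poly f)))
        = chi (G f a) * (if ∀ e : ZI f, c f a e = 0
            then (2 : ℤ) ^ Fintype.card (ZI f) else 0) := inner_sum f
  rw [Finset.sum_congr rfl (fun a _ => h2 a)]
  have h3 : ∀ a : YI f → ZMod 2,
      chi (G f a) * (if ∀ e : ZI f, c f a e = 0
          then (2 : ℤ) ^ Fintype.card (ZI f) else 0)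
        = if ∀ e : ZI f, c f a e = 0
            then chi (G f a) * 2 ^ Fintype.card (ZI f) else 0 := by
    intro a
    split <;> simp
  rw [Finset.sum_congr rfl (fun a _ => h3 a), ← Finset.sum_filter]
  rw [Finset.sum_nbij' (i := fun (a : YI f → ZMod 2) => fun i0 : Fin n => a ⟨i0, 0⟩)
    (j := fun (x : Fin n → ZMod 2) => fun y : YI f => x y.1)
    (t := Finset.univ)
    (g := fun x : Fin n → ZMod 2 => chi (eval x f) * 2 ^ Fintype.card (ZI f))
    (fun a _ => Finset.mem_univ _)
    ?_ ?_ ?_ ?_]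
  · rw [← Finset.sum_mul, mul_comm]
  · intro x _
    rw [Finset.mem_filter]
    refine ⟨Finset.mem_univ _, fun e => ?_⟩
    rw [c]
    exact CharTwo.add_self_eq_zero _
  · intro a ha
    rw [Finset.mem_filter] at ha
    funext y
    obtain ⟨i0, j⟩ := y
    exact (chain_const f ha.2 i0 j).symm
  · intro x _
    rfl
  · intro a ha
    rw [Finset.mem_filter] at ha
    have hG : G f a = eval (fun i0 : Fin n => a ⟨i0, 0⟩) f := by
      rw [eval_f_eq f hml, G]
      exact Finset.sum_congr rfl fun s _ =>
        Finset.prod_congr rfl fun i _ => chain_const f ha.2 i _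
    rw [hG]

end Gap

end SparsifyAux

/-- For every multilinear polynomial `f` over `𝔽₂` in `n` variables of total
degree at most 3 with zero constant coefficient, there is a multilinear polynomial `f'` in `m`
variables of total degree at most 3 with zero constant coefficient in which every variable
occurs in at most 3 monomials, such that `gap(f') = 2^k · gap(f)` for some `k`. -/
theorem sparsify_variable_occurrences (n : ℕ) (f : MvPolynomial (Fin n) (ZMod 2))
    (hml : ∀ i, f.degreeOf i ≤ 1) (hdeg : f.totalDegree ≤ 3) (hconst : f.coeff 0 = 0) :
    ∃ (m k : ℕ) (f' : MvPolynomial (Fin m) (ZMod 2)),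
      (∀ i, f'.degreeOf i ≤ 1) ∧ f'.totalDegree ≤ 3 ∧ f'.coeff 0 = 0 ∧
      (∀ i : Fin m, (f'.support.filter fun mon => mon i ≠ 0).card ≤ 3) ∧
      gap (fun x => eval x f') = 2 ^ k * gap (fun x => eval x f) := by
  classical
  set e := Fintype.equivFin (SparsifyAux.V f) with he
  refine ⟨Fintype.card (SparsifyAux.V f), Fintype.card (SparsifyAux.ZI f),
    rename e (SparsifyAux.poly f), ?_, ?_, ?_, ?_, ?_⟩
  · intro i
    rw [show i = e (e.symm i) from (e.apply_symm_apply i).symm,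
      degreeOf_rename_of_injective e.injective]
    exact SparsifyAux.poly_degreeOf f hconst _
  · exact le_trans (totalDegree_rename_le _ _)
      (SparsifyAux.poly_totalDegree f hconst hdeg)
  · have h0 := coeff_rename_mapDomain e e.injective (SparsifyAux.poly f) 0
    rw [Finsupp.mapDomain_zero] at h0
    rw [h0]
    exact SparsifyAux.poly_coeff_zero f hconst
  · intro i
    rw [support_rename_of_injective e.injective, Finset.filter_image,
      Finset.card_image_of_injective _ (Finsupp.mapDomain_injective e.injective)]
    have hmap : ∀ s : SparsifyAux.V f →₀ ℕ,
        Finsupp.mapDomain e s i = s (e.symm i) := by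
      intro s
      conv_lhs => rw [show i = e (e.symm i) from (e.apply_symm_apply i).symm]
      rw [Finsupp.mapDomain_apply e.injective]
    have hfil : ((SparsifyAux.poly f).support.filter
          fun s => Finsupp.mapDomain e s i ≠ 0)
        = ((SparsifyAux.poly f).support.filter fun s => s (e.symm i) ≠ 0) := by
      apply Finset.filter_congr
      intro s _
      rw [hmap s]
    rw [hfil]
    exact SparsifyAux.poly_occ f hconst (e.symm i)
  · have hsum : gap (fun x => eval x (rename e (SparsifyAux.poly f)))
        = ∑ y : SparsifyAux.V f → ZMod 2, SparsifyAux.chi (eval y (SparsifyAux.poly f)) := by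
      refine (Fintype.sum_equiv (Equiv.arrowCongr e (Equiv.refl (ZMod 2)))
        (fun y : SparsifyAux.V f → ZMod 2 => SparsifyAux.chi (eval y (SparsifyAux.poly f)))
        (fun x => SparsifyAux.chi (eval x (rename e (SparsifyAux.poly f)))) ?_).symm
      intro y
      rw [eval_rename]
      congr 1
      apply congrArg (fun z => eval z (SparsifyAux.poly f))
      funext w
      simp [Equiv.arrowCongr]
    rw [hsum, SparsifyAux.gap_poly f hml]
    rfl
end
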